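/- For m ≥ 0 let k_1(m) denote the unique solution in [π/4, π/2] of m·sin(2k) + k·cos(2k) = 0, and set E_1(m)² := m² + k_1(m)². Then there exist constants C > 0 and m_0 > 0 such that for all m ∈ [0, m_0] one has |E_1(m)² − (π²/16 + m + (1 − 4/π²)·m²)| ≤ C·m³. -/

import Mathlib

set_option maxHeartbeats 1600000


open Real

/-- Asymptotic expansion `E_1(m)² = π²/16 + m + (1 − 4/π²)m² + O(m³)` as `m → 0`,
where `E_1(m)² = m² + k_1(m)²` and `k_1(m)` is the unique solution in `[π/4, π/2]`
of `m·sin(2k) + k·cos(2k) = 0`. -/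
private lemma corebound (t s c : ℝ) (ht0 : 0 < t) (ht : t ≤ 1/10)
    (hs1 : s ≤ t) (hs2 : t - t^3/4 ≤ s) (hc1 : c ≤ 1) (hc2 : 1 - t^2/2 ≤ c) :
    |π^2*((π/4+t/2)^2 - π^2/16)*c^2 - π^2*(π/4+t/2)*s*c + 4*(π/4+t/2)^2*s^2| ≤ 30*t^3 := by
  have hπ1 : (3.141 : ℝ) < π := by linarith [Real.pi_gt_d6]
  have hπ2 : π < 3.15 := by linarith [Real.pi_lt_d2]
  have hπ0 : (0:ℝ) < π := by linarith
  have hπsq : π^2 ≤ 9.93 := by nlinarith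
  have hπ3 : π^3 ≤ 31.3 := by nlinarith
  have ht2 : t^2 ≤ t/10 := by nlinarith
  have ht3 : (0:ℝ) ≤ t^3 := by positivity
  have ht4 : t^4 ≤ t^3/10 := by nlinarith
  have hc0 : (0:ℝ) ≤ c := by nlinarith
  have hs0 : (0:ℝ) ≤ s := by nlinarith
  have e1u : c^2 - 1 ≤ 0 := by
    nlinarith [mul_nonneg (by linarith : (0:ℝ) ≤ 1-c) (by linarith : (0:ℝ) ≤ 1+c)]
  have e1l : -(t^2) ≤ c^2 - 1 := by nlinarith
  have e2u : s*c - t ≤ 0 := by nlinarith [mul_le_mul hs1 hc1 hc0 ht0.le]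
  have e2l : -(3/4*t^3) ≤ s*c - t := by
    nlinarith [mul_le_mul hs2 hc2 (by nlinarith : (0:ℝ) ≤ 1 - t^2/2) hs0]
  have e3u : s^2 - t^2 ≤ 0 := by nlinarith [mul_le_mul hs1 hs1 hs0 ht0.le]
  have e3l : -(t^4/2) ≤ s^2 - t^2 := by
    nlinarith [mul_le_mul (by linarith : t - s ≤ t^3/4) (by linarith : t + s ≤ 2*t)
      (by linarith : (0:ℝ) ≤ t + s) (by positivity : (0:ℝ) ≤ t^3/4)]
  have c1l : (0:ℝ) ≤ π^2*(π*t/4+t^2/4) := by positivity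
  have c1u : π^2*(π*t/4+t^2/4) ≤ 8.2*t := by
    nlinarith [mul_le_mul_of_nonneg_right hπ3 ht0.le, mul_le_mul_of_nonneg_right hπsq (sq_nonneg t)]
  have c2l : (0:ℝ) ≤ π^2*(π/4+t/2) := by positivity
  have c2u : π^2*(π/4+t/2) ≤ 8.4 := by nlinarith [mul_le_mul_of_nonneg_left ht (sq_nonneg π)]
  have c3l : (0:ℝ) ≤ 4*(π/4+t/2)^2 := by positivity
  have c3u : 4*(π/4+t/2)^2 ≤ 2.9 := by
    nlinarith [mul_le_mul hπ2.le ht ht0.le (by norm_num : (0:ℝ) ≤ 3.15)]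
  have g1u : π^2*(π*t/4+t^2/4)*(c^2-1) ≤ 0 := mul_nonpos_of_nonneg_of_nonpos c1l e1u
  have g1l : -(8.2*t^3) ≤ π^2*(π*t/4+t^2/4)*(c^2-1) := by
    nlinarith [mul_le_mul_of_nonneg_left e1l c1l, mul_le_mul_of_nonneg_right c1u (sq_nonneg t)]
  have g2u : π^2*(π/4+t/2)*(s*c-t) ≤ 0 := mul_nonpos_of_nonneg_of_nonpos c2l e2u
  have g2l : -(8.4*(3/4*t^3)) ≤ π^2*(π/4+t/2)*(s*c-t) := by
    nlinarith [mul_le_mul_of_nonneg_left e2l c2l, mul_le_mul_of_nonneg_right c2u ht3]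
  have g3u : 4*(π/4+t/2)^2*(s^2-t^2) ≤ 0 := mul_nonpos_of_nonneg_of_nonpos c3l e3u
  have g3l : -(2.9*(t^4/2)) ≤ 4*(π/4+t/2)^2*(s^2-t^2) := by
    nlinarith [mul_le_mul_of_nonneg_left e3l c3l,
      mul_le_mul_of_nonneg_right c3u (by positivity : (0:ℝ) ≤ t^4)]
  have hid : π^2*((π/4+t/2)^2 - π^2/16)*c^2 - π^2*(π/4+t/2)*s*c + 4*(π/4+t/2)^2*s^2
      = π*t^3 + t^4 + π^2*(π*t/4+t^2/4)*(c^2-1) - π^2*(π/4+t/2)*(s*c-t)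
        + 4*(π/4+t/2)^2*(s^2-t^2) := by ring
  have hp : π*t^3 ≤ 3.15*t^3 := mul_le_mul_of_nonneg_right hπ2.le ht3
  have hp0 : 0 ≤ π*t^3 := by positivity
  rw [hid, abs_le]
  constructor <;> linarith

theorem E1_sq_asymptotic_expansion (k1 : ℝ → ℝ)
    (hk1 : ∀ m : ℝ, 0 ≤ m → k1 m ∈ Set.Icc (π / 4) (π / 2) ∧
      m * Real.sin (2 * k1 m) + k1 m * Real.cos (2 * k1 m) = 0) :
    ∃ C > 0, ∃ m0 > 0, ∀ m ∈ Set.Icc (0 : ℝ) m0,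
      |(m ^ 2 + (k1 m) ^ 2) - (π ^ 2 / 16 + m + (1 - 4 / π ^ 2) * m ^ 2)| ≤ C * m ^ 3 := by
  refine ⟨40, by norm_num, 1/20, by norm_num, ?_⟩
  rintro m ⟨hm0, hm1⟩
  obtain ⟨⟨hk_lo, hk_hi⟩, heq⟩ := hk1 m hm0
  have hπ1 : (3.141 : ℝ) < π := by linarith [Real.pi_gt_d6]
  have hπ2 : π < 3.15 := by linarith [Real.pi_lt_d2]
  have hπ0 : (0:ℝ) < π := by linarith
  obtain ⟨t, ht0, htpi, hkt⟩ : ∃ t, 0 ≤ t ∧ t ≤ π/2 ∧ k1 m = π/4 + t/2 :=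
    ⟨2*k1 m - π/2, by linarith, by linarith, by ring⟩
  rw [hkt] at heq ⊢
  rw [show 2*(π/4+t/2) = t + π/2 by ring, Real.sin_add_pi_div_two,
    Real.cos_add_pi_div_two] at heq
  have heq' : m * Real.cos t = (π/4+t/2) * Real.sin t := by linear_combination heq
  have hk_pos : (0:ℝ) < π/4+t/2 := by linarith
  rcases eq_or_lt_of_le hm0 with hm | hm
  · -- m = 0
    have hsk : (π/4+t/2) * Real.sin t = 0 := by rw [← heq', ← hm]; ring
    have hst0 : Real.sin t = 0 := by
      rcases mul_eq_zero.1 hsk with h | h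
      · exact absurd h (ne_of_gt hk_pos)
      · exact h
    have ht' : t = 0 := by
      by_contra h
      have htpos : 0 < t := lt_of_le_of_ne ht0 (Ne.symm h)
      have := Real.sin_pos_of_pos_of_lt_pi htpos (by linarith)
      linarith
    have e : m ^ 2 + (π/4+t/2) ^ 2 - (π ^ 2 / 16 + m + (1 - 4 / π ^ 2) * m ^ 2) = 0 := by
      rw [ht', ← hm]; ring
    rw [e, ← hm]
    norm_num
  · -- m > 0
    have hcle : Real.cos t ≤ 1 := Real.cos_le_one t
    have hst : 2/π * t ≤ Real.sin t := Real.mul_le_sin ht0 htpi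
    have hsin_nonneg : 0 ≤ Real.sin t := le_trans (by positivity) hst
    have hcos_le_m : (π/4+t/2) * Real.sin t ≤ m := by
      rw [← heq']; nlinarith
    have hhalf : t/2 ≤ (π/4+t/2) * Real.sin t := by
      have h1 : (π/4) * (2/π * t) ≤ (π/4+t/2) * Real.sin t :=
        mul_le_mul (by linarith) hst (by positivity) hk_pos.le
      have h2 : (π/4) * (2/π * t) = t/2 := by field_simp; ring
      linarith [h2 ▸ h1]
    have ht2m : t ≤ 2*m := by linarith
    have htle : t ≤ 1/10 := by linarith
    have htpos : 0 < t := by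
      by_contra h
      have ht' : t = 0 := le_antisymm (not_lt.1 h) ht0
      rw [ht'] at heq'
      simp [Real.cos_zero, Real.sin_zero] at heq'
      linarith
    have hs1 : Real.sin t ≤ t := by
      calc Real.sin t ≤ |Real.sin t| := le_abs_self _
        _ ≤ |t| := Real.abs_sin_le_abs
        _ = t := abs_of_nonneg ht0
    have hs2 : t - t^3/4 ≤ Real.sin t := by have := Real.sin_gt_sub_cube htpos; have := pow_pos htpos 3; linarith
    have hc2 : 1 - t^2/2 ≤ Real.cos t := Real.one_sub_sq_div_two_le_cos
    have hcore := corebound t (Real.sin t) (Real.cos t) htpos htle hs1 hs2 hcle hc2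
    set X := m ^ 2 + (π/4+t/2) ^ 2 - (π ^ 2 / 16 + m + (1 - 4 / π ^ 2) * m ^ 2) with hX
    have hπne : π ≠ 0 := ne_of_gt hπ0
    have hY : π^2 * X = π^2*((π/4+t/2)^2 - π^2/16 - m) + 4*m^2 := by
      rw [hX]; field_simp; ring
    have hkey : (π^2 * X) * (Real.cos t)^2
        = π^2*((π/4+t/2)^2 - π^2/16)*(Real.cos t)^2
          - π^2*(π/4+t/2)*(Real.sin t)*(Real.cos t) + 4*(π/4+t/2)^2*(Real.sin t)^2 := by
      rw [hY]
      linear_combination (4*(m*Real.cos t + (π/4+t/2)*Real.sin t) - π^2*Real.cos t) * heq'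
    have habs : |(π^2*X) * (Real.cos t)^2| ≤ 30*t^3 := by rw [hkey]; exact hcore
    have habs' : π^2 * |X| * (Real.cos t)^2 ≤ 30*t^3 := by
      have e : |(π^2*X) * (Real.cos t)^2| = π^2 * |X| * (Real.cos t)^2 := by
        rw [abs_mul, abs_mul, abs_of_nonneg (by positivity : (0:ℝ) ≤ π^2),
          abs_of_nonneg (sq_nonneg (Real.cos t))]
      linarith [e ▸ habs]
    have hcge : (0.99:ℝ) ≤ Real.cos t := by nlinarith
    have hD : (9:ℝ) ≤ π^2 * (Real.cos t)^2 := by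
      nlinarith [mul_le_mul hπ1.le hcge (by norm_num) hπ0.le]
    have htm3 : t^3 ≤ 8*m^3 := by
      nlinarith [pow_le_pow_left₀ ht0 ht2m 3]
    have hXabs : 9 * |X| ≤ 240 * m^3 := by
      nlinarith [mul_nonneg (by linarith : (0:ℝ) ≤ π^2*(Real.cos t)^2 - 9) (abs_nonneg X),
        abs_nonneg X]
    linarith [abs_nonneg X]
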